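/- Let L be a set of lines in F_q^2 of the form y = ax + b with a ≠ 0, and let A, B ⊆ F_q with P = A × B. Let L_x = {a : (y = ax + b) ∈ L}, and suppose |L||A| > q^α · max{|A|, |L_x|} for some α ∈ (0,1). Then I(A × B, L) ≤ C(|L||A||B|^{1/2}/q^{α/2} + q^α |L|^{1/2}|A|^{1/2}|B|^{1/2}) for an absolute constant C. -/

import Mathlib

open scoped Classical

set_option maxHeartbeats 1000000 in
lemma key_real (n L A B Lx M : ℝ) (hn : 0 ≤ n) (hA : 0 ≤ A) (hB : 0 ≤ B) (hL : 0 ≤ L)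
    (hLx : 0 ≤ Lx) (hM : 0 < M)
    (h1 : n ≤ L * A) (h2 : n ≤ L * B) (h3 : n ≤ A * B * Lx)
    (h4 : n ≤ A * B * Real.sqrt L + L)
    (hyp : M * Lx ≤ L * A) :
    n ≤ 2 * (L * A * Real.sqrt B / Real.sqrt M +
      M * Real.sqrt (L * A * B)) := by
  obtain ⟨a, ha, rfl⟩ : ∃ a : ℝ, 0 ≤ a ∧ A = a ^ 2 :=
    ⟨Real.sqrt A, Real.sqrt_nonneg _, (Real.sq_sqrt hA).symm⟩
  obtain ⟨b, hb, rfl⟩ : ∃ b : ℝ, 0 ≤ b ∧ B = b ^ 2 :=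
    ⟨Real.sqrt B, Real.sqrt_nonneg _, (Real.sq_sqrt hB).symm⟩
  obtain ⟨l, hl, rfl⟩ : ∃ l : ℝ, 0 ≤ l ∧ L = l ^ 2 :=
    ⟨Real.sqrt L, Real.sqrt_nonneg _, (Real.sq_sqrt hL).symm⟩
  obtain ⟨m, hm, rfl⟩ : ∃ m : ℝ, 0 < m ∧ M = m ^ 2 :=
    ⟨Real.sqrt M, Real.sqrt_pos.2 hM, (Real.sq_sqrt hM.le).symm⟩
  rw [Real.sqrt_sq hl] at h4
  rw [Real.sqrt_sq hb, Real.sqrt_sq hm.le,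
    show l ^ 2 * a ^ 2 * b ^ 2 = (l * a * b) ^ 2 by ring,
    Real.sqrt_sq (by positivity)]
  -- trivial cases
  rcases eq_or_lt_of_le ha with rfl | ha'
  · have h0 : n = 0 := le_antisymm (by nlinarith) hn
    rw [h0]; positivity
  rcases eq_or_lt_of_le hb with rfl | hb'
  · have h0 : n = 0 := le_antisymm (by nlinarith) hn
    rw [h0]; positivity
  rcases eq_or_lt_of_le hl with rfl | hl'
  · have h0 : n = 0 := le_antisymm (by nlinarith) hn
    rw [h0]; positivity
  -- clear the division
  have hgoal : 2 * (l ^ 2 * a ^ 2 * b / m + m ^ 2 * (l * a * b)) =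
      (2 * (l ^ 2 * a ^ 2 * b) + 2 * (m ^ 2 * (l * a * b)) * m) / m := by
    field_simp
  rw [hgoal, le_div_iff₀ hm]
  by_contra hcon
  push_neg at hcon
  -- hcon : 2 * X + 2 * Y * m < n * m
  have hgeo : n ≤ l ^ 2 * (a * b) := by
    nlinarith [sq_nonneg (l ^ 2 * a ^ 2 - l ^ 2 * b ^ 2), sq_nonneg n,
      mul_nonneg (mul_nonneg (sq_nonneg l) ha) hb]
  have hYm : 0 ≤ 2 * (m ^ 2 * (l * a * b)) * m := by positivity
  have hX : 0 ≤ 2 * (l ^ 2 * a ^ 2 * b) := by positivity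
  -- (1) m > 2a
  have hma : 2 * a < m := by
    have hpos : 0 < l ^ 2 * (a * b) := by positivity
    have h5 : n * m ≤ l ^ 2 * (a * b) * m := mul_le_mul_of_nonneg_right hgeo hm.le
    have hx : l ^ 2 * (a * b) * (2 * a) < l ^ 2 * (a * b) * m := by nlinarith
    exact lt_of_mul_lt_mul_left hx hpos.le
  -- (2) split from h4
  have h4m : n * m ≤ a ^ 2 * b ^ 2 * l * m + l ^ 2 * m :=
    le_trans (mul_le_mul_of_nonneg_right h4 hm.le) (le_of_eq (by ring))
  have hsplit : a ^ 2 * b ^ 2 * l * m > l ^ 2 * a ^ 2 * b ∨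
      l ^ 2 * m > l ^ 2 * a ^ 2 * b := by
    by_contra hc
    push_neg at hc
    nlinarith [hc.1, hc.2]
  rcases hsplit with hP | hQ
  · -- Case P : b * m > l
    have hbm : l < b * m := by
      have hpos : 0 < a ^ 2 * b * l := by positivity
      have hx : a ^ 2 * b * l * l < a ^ 2 * b * l * (b * m) := by nlinarith
      exact lt_of_mul_lt_mul_left hx hpos.le
    have h2m2b : 2 * (m ^ 2 * b) < l * a := by
      have hpos : 0 < l * a := by positivity
      have h5 : n * m ≤ l ^ 2 * a ^ 2 * m := by
        nlinarith [mul_le_mul_of_nonneg_right h1 hm.le]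
      have hx : l * a * (2 * (m ^ 2 * b)) < l * a * (l * a) := by nlinarith
      exact lt_of_mul_lt_mul_left hx hpos.le
    -- l < b*m ⇒ l*a < a*b*m ⇒ 2 m^2 b < a b m ⇒ 2m < a; contradiction
    have hla : l * a < a * b * m := by nlinarith
    have h2ma : 2 * m < a := by
      have hpos : 0 < m * b := by positivity
      have hx : m * b * (2 * m) < m * b * a := by nlinarith
      exact lt_of_mul_lt_mul_left hx hpos.le
    linarith
  · -- Case Q : m > a^2 * b
    have hQ' : a ^ 2 * b < m := by
      have hpos : 0 < l ^ 2 := by positivity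
      have hx : l ^ 2 * (a ^ 2 * b) < l ^ 2 * m := by nlinarith
      exact lt_of_mul_lt_mul_left hx hpos.le
    -- n*m ≤ a²b² Lx m and m² Lx ≤ l² a²
    have h5 : n * m ≤ a ^ 2 * b ^ 2 * Lx * m :=
      mul_le_mul_of_nonneg_right h3 hm.le
    have h6 : m ^ 2 * Lx ≤ l ^ 2 * a ^ 2 := hyp
    have h2mab : 2 * m < a ^ 2 * b := by
      have hpos : 0 < l ^ 2 * a ^ 2 * b := by positivity
      have hx : l ^ 2 * a ^ 2 * b * (2 * m) < l ^ 2 * a ^ 2 * b * (a ^ 2 * b) := by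
        nlinarith [mul_le_mul_of_nonneg_left h6 (by positivity : (0:ℝ) ≤ a ^ 2 * b ^ 2),
          mul_le_mul_of_nonneg_right h5 hm.le]
      exact lt_of_mul_lt_mul_left hx hpos.le
    linarith

section
variable {F : Type} [Field F] [Fintype F]

lemma card_c1 (A B : Finset F) (L : Finset (F × F)) :
    (((A ×ˢ B) ×ˢ L).filter fun pl => pl.1.2 = pl.2.1 * pl.1.1 + pl.2.2).card ≤
      L.card * A.card := by
  classical
  have h := Finset.card_le_card_of_injOn (fun pl => (pl.1.1, pl.2))
    (s := ((A ×ˢ B) ×ˢ L).filter fun pl => pl.1.2 = pl.2.1 * pl.1.1 + pl.2.2)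
    (t := A ×ˢ L) ?_ ?_
  · simpa [Finset.card_product, Nat.mul_comm] using h
  · intro pl hpl
    simp only [Finset.mem_coe, Finset.mem_filter, Finset.mem_product] at hpl
    simp [hpl.1.1.1, hpl.1.2]
  · intro pl hpl pl' hpl' heq
    simp only [Finset.coe_filter, Set.mem_setOf_eq, Finset.mem_coe, Finset.mem_product] at hpl hpl'
    simp only [Prod.mk.injEq] at heq
    obtain ⟨h1, h2⟩ := heq
    have h3 : pl.1.2 = pl'.1.2 := by rw [hpl.2, hpl'.2, h1, h2]
    exact Prod.ext (Prod.ext h1 h3) h2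

lemma card_c2 (A B : Finset F) (L : Finset (F × F)) (hL : ∀ l ∈ L, l.1 ≠ 0) :
    (((A ×ˢ B) ×ˢ L).filter fun pl => pl.1.2 = pl.2.1 * pl.1.1 + pl.2.2).card ≤
      L.card * B.card := by
  classical
  have h := Finset.card_le_card_of_injOn (fun pl => (pl.1.2, pl.2))
    (s := ((A ×ˢ B) ×ˢ L).filter fun pl => pl.1.2 = pl.2.1 * pl.1.1 + pl.2.2)
    (t := B ×ˢ L) ?_ ?_
  · simpa [Finset.card_product, Nat.mul_comm] using h
  · intro pl hpl
    simp only [Finset.mem_coe, Finset.mem_filter, Finset.mem_product] at hpl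
    simp [hpl.1.1.2, hpl.1.2]
  · intro pl hpl pl' hpl' heq
    simp only [Finset.coe_filter, Set.mem_setOf_eq, Finset.mem_coe, Finset.mem_product] at hpl hpl'
    simp only [Prod.mk.injEq] at heq
    obtain ⟨h1, h2⟩ := heq
    have ha0 : pl.2.1 ≠ 0 := hL _ hpl.1.2
    have h3 : pl.1.1 = pl'.1.1 := by
      have := hpl.2
      have h' := hpl'.2
      rw [← h2] at h'
      rw [h1] at this
      have : pl.2.1 * pl.1.1 = pl.2.1 * pl'.1.1 := by
        have := this.symm.trans h'
        linear_combination this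
      exact mul_left_cancel₀ ha0 this
    exact Prod.ext (Prod.ext h3 h1) h2

lemma card_c3 (A B : Finset F) (L : Finset (F × F)) :
    (((A ×ˢ B) ×ˢ L).filter fun pl => pl.1.2 = pl.2.1 * pl.1.1 + pl.2.2).card ≤
      A.card * B.card * (L.image Prod.fst).card := by
  classical
  have h := Finset.card_le_card_of_injOn (fun pl => (pl.1, pl.2.1))
    (s := ((A ×ˢ B) ×ˢ L).filter fun pl => pl.1.2 = pl.2.1 * pl.1.1 + pl.2.2)
    (t := (A ×ˢ B) ×ˢ (L.image Prod.fst)) ?_ ?_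
  · simpa [Finset.card_product, Nat.mul_comm] using h
  · intro pl hpl
    simp only [Finset.mem_coe, Finset.mem_filter, Finset.mem_product] at hpl
    simp only [Finset.mem_coe, Finset.mem_product, Finset.mem_image]
    exact ⟨hpl.1.1, ⟨pl.2, hpl.1.2, rfl⟩⟩
  · intro pl hpl pl' hpl' heq
    simp only [Finset.coe_filter, Set.mem_setOf_eq, Finset.mem_coe, Finset.mem_product] at hpl hpl'
    simp only [Prod.mk.injEq] at heq
    obtain ⟨h1, h2⟩ := heq
    have h3 : pl.2.2 = pl'.2.2 := by
      have e1 := hpl.2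
      have e2 := hpl'.2
      rw [← h1, ← h2] at e2
      exact add_left_cancel (e1.symm.trans e2)
    exact Prod.ext h1 (Prod.ext h2 h3)

end

section
variable {F : Type} [Field F]

lemma card_c4 (A B : Finset F) (L : Finset (F × F)) (hL : ∀ l ∈ L, l.1 ≠ 0) :
    (((A ×ˢ B) ×ˢ L).filter fun pl => pl.1.2 = pl.2.1 * pl.1.1 + pl.2.2).card ^ 2 ≤
      L.card * ((A.card * B.card) ^ 2 +
        (((A ×ˢ B) ×ˢ L).filter fun pl => pl.1.2 = pl.2.1 * pl.1.1 + pl.2.2).card) := by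
  classical
  set S := ((A ×ˢ B) ×ˢ L).filter fun pl => pl.1.2 = pl.2.1 * pl.1.1 + pl.2.2 with hS
  set T : F × F → Finset (F × F) :=
    fun l => (A ×ˢ B).filter fun p => p.2 = l.1 * p.1 + l.2 with hT
  -- step 1 : S.card = ∑ l in L, (T l).card
  have hsum : S.card = ∑ l ∈ L, (T l).card := by
    rw [Finset.card_eq_sum_card_fiberwise (f := Prod.snd) (t := L)
      (fun x hx => by simp only [hS, Finset.mem_coe, Finset.mem_filter, Finset.mem_product] at hx; exact hx.1.2)]
    refine Finset.sum_congr rfl fun l hl => ?_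
    refine Finset.card_bij (fun pl _ => pl.1) ?_ ?_ ?_
    · intro pl hpl
      simp only [hS, Finset.mem_filter, Finset.mem_product] at hpl
      simp only [hT, Finset.mem_filter, Finset.mem_product]
      obtain ⟨⟨⟨hA, hB⟩, _⟩, heq⟩ := hpl.1
      refine ⟨⟨hA, hB⟩, ?_⟩
      rw [← hpl.2]; exact heq
    · intro pl hpl pl' hpl' heq
      simp only [hS, Finset.mem_filter, Finset.mem_product] at hpl hpl'
      exact Prod.ext heq (hpl.2.trans hpl'.2.symm)
    · intro p hp
      simp only [hT, Finset.mem_filter, Finset.mem_product] at hp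
      refine ⟨(p, l), ?_, rfl⟩
      simp only [hS, Finset.mem_filter, Finset.mem_product]
      exact ⟨⟨⟨hp.1, hl⟩, hp.2⟩, trivial⟩
  -- step 3-4 : ∑ (T l).card ^ 2 ≤ (A.card*B.card)^2 + S.card
  have hoff : ∑ l ∈ L, (T l).offDiag.card ≤ (A.card * B.card) ^ 2 := by
    have h1 : ∑ l ∈ L, (T l).offDiag.card = (L.sigma fun l => (T l).offDiag).card :=
      (Finset.card_sigma L _).symm
    rw [h1]
    have h2 := Finset.card_le_card_of_injOn (fun x => x.2)
      (s := L.sigma fun l => (T l).offDiag) (t := (A ×ˢ B).offDiag) ?_ ?_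
    · refine h2.trans ?_
      rw [Finset.offDiag_card, Finset.card_product]
      exact le_trans (Nat.sub_le _ _) (by rw [sq])
    · intro x hx
      simp only [Finset.mem_coe, Finset.mem_sigma, Finset.mem_offDiag] at hx ⊢
      obtain ⟨hl, hp1, hp2, hne⟩ := hx
      simp only [hT, Finset.mem_filter] at hp1 hp2
      exact ⟨hp1.1, hp2.1, hne⟩
    · rintro ⟨l, p, p'⟩ hx ⟨l2, q, q'⟩ hy heq
      simp only [Finset.coe_sigma, Set.mem_sigma_iff, Finset.mem_coe, Finset.mem_sigma,
        Finset.mem_offDiag] at hx hy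
      simp only at heq
      obtain ⟨hl1, hp1, hp2, hne⟩ := hx
      obtain ⟨hl2, hq1, hq2, hne2⟩ := hy
      obtain ⟨h1, h2⟩ := Prod.mk.inj heq
      subst h1
      subst h2
      simp only [hT, Finset.mem_filter] at hp1 hp2 hq1 hq2
      have ep := hp1.2
      have ep' := hp2.2
      have eq1 := hq1.2
      have eq2 := hq2.2
      have hx12 : p.1 ≠ p'.1 := by
        intro h
        exact hne (Prod.ext h (by rw [ep, ep', h]))
      have e0 : (l.1 - l2.1) * (p.1 - p'.1) = 0 := by
        linear_combination eq1 - eq2 - ep + ep'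
      have h11 : l.1 = l2.1 := by
        rcases mul_eq_zero.1 e0 with h | h
        · exact sub_eq_zero.1 h
        · exact absurd (sub_eq_zero.1 h) hx12
      have h22 : l.2 = l2.2 := by
        rw [h11] at ep
        linear_combination eq1 - ep
      have hll : l = l2 := Prod.ext h11 h22
      subst hll
      rfl
  -- step 2 : Cauchy-Schwarz over ℕ
  have cheb : (∑ l ∈ L, (T l).card) ^ 2 ≤ L.card * ∑ l ∈ L, (T l).card ^ 2 :=
    sq_sum_le_card_mul_sum_sq
  have hsq : ∀ l ∈ L, (T l).card ^ 2 = (T l).offDiag.card + (T l).card := by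
    intro l _
    rw [Finset.offDiag_card, sq]
    rcases Nat.eq_zero_or_pos (T l).card with h | h
    · simp [h]
    · have hcc := Nat.le_mul_of_pos_left (T l).card h
      omega
  have hsum2 : ∑ l ∈ L, (T l).card ^ 2 ≤ (A.card * B.card) ^ 2 + S.card := by
    calc ∑ l ∈ L, (T l).card ^ 2 = ∑ l ∈ L, ((T l).offDiag.card + (T l).card) :=
          Finset.sum_congr rfl hsq
      _ = (∑ l ∈ L, (T l).offDiag.card) + ∑ l ∈ L, (T l).card := Finset.sum_add_distrib
      _ ≤ (A.card * B.card) ^ 2 + S.card := by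
          rw [← hsum]; exact Nat.add_le_add_right hoff _
  calc S.card ^ 2 = (∑ l ∈ L, (T l).card) ^ 2 := by rw [hsum]
    _ ≤ L.card * ∑ l ∈ L, (T l).card ^ 2 := cheb
    _ ≤ L.card * ((A.card * B.card) ^ 2 + S.card) := Nat.mul_le_mul_left _ hsum2

end

lemma kst_real {K L P : ℝ} (hK : 0 ≤ K) (hL : 0 ≤ L) (hP : 0 ≤ P)
    (h : K ^ 2 ≤ L * (P ^ 2 + K)) : K ≤ P * Real.sqrt L + L := by
  by_contra h'
  push_neg at h'
  have hs := Real.sq_sqrt hL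
  have hs0 := Real.sqrt_nonneg L
  have h1 : P * Real.sqrt L < K - L := by nlinarith
  have h2 : P * Real.sqrt L < K := by nlinarith
  have h3 := mul_lt_mul'' h1 h2 (mul_nonneg hP hs0) (mul_nonneg hP hs0)
  nlinarith

theorem stmt_6 : ∃ C : ℝ, 0 < C ∧
    ∀ (F : Type) [Field F] [Fintype F], ∀ (A B : Finset F) (L : Finset (F × F)) (α : ℝ),
      (∀ l ∈ L, l.1 ≠ 0) → 0 < α → α < 1 →
      (Fintype.card F : ℝ) ^ α * max (A.card : ℝ) ((L.image Prod.fst).card : ℝ) <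
        (L.card : ℝ) * (A.card : ℝ) →
      ((((A ×ˢ B) ×ˢ L).filter fun pl => pl.1.2 = pl.2.1 * pl.1.1 + pl.2.2).card : ℝ) ≤
        C * ((L.card : ℝ) * (A.card : ℝ) * Real.sqrt B.card / (Fintype.card F : ℝ) ^ (α / 2)
          + (Fintype.card F : ℝ) ^ α *
            Real.sqrt ((L.card : ℝ) * (A.card : ℝ) * (B.card : ℝ))) := by
  refine ⟨2, by norm_num, ?_⟩
  intro F _ _ A B L α hL0 hα0 hα1 hyp
  classical
  have hq : (0:ℝ) < (Fintype.card F : ℝ) := by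
    exact_mod_cast Nat.cast_pos.2 Fintype.card_pos
  have hM : (0:ℝ) < (Fintype.card F : ℝ) ^ α := Real.rpow_pos_of_pos hq α
  have hsqrtM : Real.sqrt ((Fintype.card F : ℝ) ^ α) = (Fintype.card F : ℝ) ^ (α / 2) := by
    rw [Real.sqrt_eq_rpow, ← Real.rpow_mul hq.le]
    ring_nf
  rw [← hsqrtM]
  have hc1 : ((((A ×ˢ B) ×ˢ L).filter fun pl =>
      pl.1.2 = pl.2.1 * pl.1.1 + pl.2.2).card : ℝ) ≤ (L.card : ℝ) * (A.card : ℝ) := by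
    exact_mod_cast card_c1 A B L
  have hc2 : ((((A ×ˢ B) ×ˢ L).filter fun pl =>
      pl.1.2 = pl.2.1 * pl.1.1 + pl.2.2).card : ℝ) ≤ (L.card : ℝ) * (B.card : ℝ) := by
    exact_mod_cast card_c2 A B L hL0
  have hc3 : ((((A ×ˢ B) ×ˢ L).filter fun pl =>
      pl.1.2 = pl.2.1 * pl.1.1 + pl.2.2).card : ℝ) ≤
      (A.card : ℝ) * (B.card : ℝ) * ((L.image Prod.fst).card : ℝ) := by
    exact_mod_cast card_c3 A B L
  have hc4 : ((((A ×ˢ B) ×ˢ L).filter fun pl =>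
      pl.1.2 = pl.2.1 * pl.1.1 + pl.2.2).card : ℝ) ^ 2 ≤
      (L.card : ℝ) * (((A.card : ℝ) * (B.card : ℝ)) ^ 2 +
        ((((A ×ˢ B) ×ˢ L).filter fun pl =>
          pl.1.2 = pl.2.1 * pl.1.1 + pl.2.2).card : ℝ)) := by
    exact_mod_cast card_c4 A B L hL0
  have h4 : ((((A ×ˢ B) ×ˢ L).filter fun pl =>
      pl.1.2 = pl.2.1 * pl.1.1 + pl.2.2).card : ℝ) ≤
      (A.card : ℝ) * (B.card : ℝ) * Real.sqrt (L.card : ℝ) + (L.card : ℝ) := by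
    have := kst_real (K := ((((A ×ˢ B) ×ˢ L).filter fun pl =>
        pl.1.2 = pl.2.1 * pl.1.1 + pl.2.2).card : ℝ))
      (L := (L.card : ℝ)) (P := (A.card : ℝ) * (B.card : ℝ))
      (by positivity) (by positivity) (by positivity) hc4
    linarith
  have hhyp : (Fintype.card F : ℝ) ^ α * ((L.image Prod.fst).card : ℝ) ≤
      (L.card : ℝ) * (A.card : ℝ) := by
    refine le_of_lt (lt_of_le_of_lt ?_ hyp)
    exact mul_le_mul_of_nonneg_left (le_max_right _ _) hM.le
  exact key_real _ _ _ _ _ _ (by positivity) (by positivity) (by positivity)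
    (by positivity) (by positivity) hM hc1 hc2 hc3 h4 hhyp
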